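/- arXiv:2506.13659 — 2 statements merged into one kernel-verified Lean document; each statement's English description precedes it below -/
import Mathlib

section
/- For every q ≥ 2 and every d ≥ 1, every path (in particular the paths of odd length 2d−1 and of even length 2d) is cross-bipartite swapping in the complete graph K_q: for all A, B ⊆ V(K_q), hom(P, K_q[A]) · hom(P, K_q[B]) ≤ hom_b(P × K_2, K_q[A,B]), where P is the path. -/
open SimpleGraph

/-- The tensor product `H × K₂`. -/
def tensorK2 {V : Type} (H : SimpleGraph V) : SimpleGraph (V × Fin 2) where
  Adj x y := H.Adj x.1 y.1 ∧ x.2 ≠ y.2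
  symm := ⟨fun _ _ h => ⟨h.1.symm, h.2.symm⟩⟩
  loopless := ⟨fun _ h => h.2 rfl⟩

/-- The number of graph homomorphisms from `H` to `G`. -/
noncomputable def homCount {V W : Type} (H : SimpleGraph V) (G : SimpleGraph W) : ℕ :=
  Nat.card (H →g G)

/-- `hom_b(H × K₂, G[A,B])`: the number of homomorphisms from `H × K₂` to `G` mapping the
side `V(H) × {1}` into `A` and the side `V(H) × {2}` into `B`. -/
noncomputable def homB {V W : Type} (H : SimpleGraph V) (G : SimpleGraph W)
    (A B : Set W) : ℕ :=
  Nat.card {f : tensorK2 H →g G // (∀ v : V, f (v, 0) ∈ A) ∧ (∀ v : V, f (v, 1) ∈ B)}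

/-- `H` is cross-bipartite swapping in `G`:
`hom(H,G[A]) ⬝ hom(H,G[B]) ≤ hom_b(H × K₂, G[A,B])` for all `A, B ⊆ V(G)`. -/
def CrossBipartiteSwapping {V W : Type} (H : SimpleGraph V) (G : SimpleGraph W) : Prop :=
  ∀ A B : Set W,
    homCount H (G.induce A) * homCount H (G.induce B) ≤ homB H G A B

/-! ### Auxiliary development -/

namespace Stmt15Aux

/-- Parity marker. -/
def par (i : ℕ) : Fin 2 := if Even i then 0 else 1

lemma par_succ_ne (i : ℕ) : par (i + 1) ≠ par i := by
  by_cases h : Even i <;> simp [par, h, Nat.even_add_one]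

lemma par_add_two (i : ℕ) : par (i + 2) = par i := by
  by_cases h : Even i <;> simp [par, h, Nat.even_add_one]

/-- A "walk with prescribed vertex sets": `f i ∈ s i` and consecutive values differ. -/
def Ok {q : ℕ} (s : ℕ → Set (Fin q)) {m : ℕ} (f : Fin m → Fin q) : Prop :=
  (∀ i : Fin m, f i ∈ s i.val) ∧ ∀ u v : Fin m, (u : ℕ) + 1 = (v : ℕ) → f u ≠ f v

/-- Number of walks with `k+1` vertices, vertex sets `s`, starting in `U`. -/
noncomputable def cnt (q : ℕ) (s : ℕ → Set (Fin q)) (k : ℕ) (U : Set (Fin q)) : ℕ :=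
  Nat.card {f : Fin (k + 1) → Fin q // Ok s f ∧ f 0 ∈ U}

lemma natCard_subtype {α : Type*} [Fintype α] (P : α → Prop) [DecidablePred P] :
    Nat.card {x // P x} = (Finset.univ.filter P).card := by
  rw [Nat.card_eq_fintype_card, Fintype.card_subtype]

lemma cnt_zero (q : ℕ) (s : ℕ → Set (Fin q)) (U : Set (Fin q)) :
    cnt q s 0 U = (s 0 ∩ U).ncard := by
  rw [cnt, ← Nat.card_coe_set_eq]
  apply Nat.card_congr
  refine ⟨fun f => ⟨f.1 0, f.2.1.1 0, f.2.2⟩, fun v => ⟨fun _ => v.1, ⟨⟨?_, ?_⟩, v.2.2⟩⟩,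
    ?_, ?_⟩
  · intro i
    have : (i : ℕ) = 0 := by omega
    rw [this]; exact v.2.1
  · intro u w h _
    have : (w : ℕ) < 1 := w.2
    omega
  · intro f
    apply Subtype.ext; funext i
    have : i = 0 := by omega
    rw [this]
  · intro v; rfl

lemma cnt_congr (q : ℕ) (s : ℕ → Set (Fin q)) (k : ℕ) {U U' : Set (Fin q)}
    (h : U ∩ s 0 = U' ∩ s 0) :
    cnt q s k U = cnt q s k U' := by
  apply Nat.card_congr
  apply Equiv.subtypeEquivRight
  intro f
  constructor
  · rintro ⟨hok, hU⟩
    refine ⟨hok, ?_⟩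
    have h0 : f 0 ∈ s 0 := hok.1 0
    have : f 0 ∈ U' ∩ s 0 := h ▸ ⟨hU, h0⟩
    exact this.1
  · rintro ⟨hok, hU⟩
    refine ⟨hok, ?_⟩
    have h0 : f 0 ∈ s 0 := hok.1 0
    have : f 0 ∈ U ∩ s 0 := h.symm ▸ ⟨hU, h0⟩
    exact this.1

lemma cnt_succ (q : ℕ) (s : ℕ → Set (Fin q)) (k : ℕ) (U : Set (Fin q)) :
    cnt q s (k + 1) U + cnt q (fun i => s (i + 1)) k (U ∩ s 0)
      = (U ∩ s 0).ncard * cnt q (fun i => s (i + 1)) k Set.univ := by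
  classical
  set s' : ℕ → Set (Fin q) := fun i => s (i + 1) with hs'
  set F : Finset (Fin (k + 2) → Fin q) :=
    Finset.univ.filter (fun f => Ok s f ∧ f 0 ∈ U) with hF
  set G : Finset (Fin (k + 1) → Fin q) :=
    Finset.univ.filter (fun g => Ok s' g) with hG
  set W : Finset (Fin q) := (U ∩ s 0).toFinset with hW
  clear_value s' F G W
  have hc1 : cnt q s (k + 1) U = F.card := by
    rw [cnt, natCard_subtype, hF]
  have hc2 : cnt q s' k (U ∩ s 0) = (G.filter (fun g => g 0 ∈ U ∩ s 0)).card := by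
    rw [cnt, natCard_subtype, hG, Finset.filter_filter]
  have hc3 : cnt q s' k Set.univ = G.card := by
    rw [cnt, natCard_subtype, hG]
    congr 1
    ext g
    simp
  have hmemW : ∀ f ∈ F, f 0 ∈ W := by
    intro f hf
    rw [hF, Finset.mem_filter] at hf
    have h0 : f 0 ∈ s 0 := hf.2.1.1 0
    rw [hW, Set.mem_toFinset]
    exact ⟨hf.2.2, h0⟩
  have hFib : F.card = ∑ v ∈ W, (F.filter (fun f => f 0 = v)).card :=
    Finset.card_eq_sum_card_fiberwise hmemW
  have hmemW' : ∀ g ∈ G.filter (fun g => g 0 ∈ U ∩ s 0), g 0 ∈ W := by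
    intro g hg
    rw [Finset.mem_filter] at hg
    rw [hW, Set.mem_toFinset]
    exact hg.2
  have hFib' : (G.filter (fun g => g 0 ∈ U ∩ s 0)).card
      = ∑ v ∈ W, ((G.filter (fun g => g 0 ∈ U ∩ s 0)).filter (fun g => g 0 = v)).card :=
    Finset.card_eq_sum_card_fiberwise hmemW'
  have hGfib : ∀ v ∈ W, ((G.filter (fun g => g 0 ∈ U ∩ s 0)).filter (fun g => g 0 = v)).card
      = (G.filter (fun g => g 0 = v)).card := by
    intro v hv
    rw [hW, Set.mem_toFinset] at hv
    congr 1
    rw [Finset.filter_filter]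
    ext g
    simp only [Finset.mem_filter]
    constructor
    · rintro ⟨h1, _, h3⟩; exact ⟨h1, h3⟩
    · rintro ⟨h1, h3⟩; exact ⟨h1, h3 ▸ hv, h3⟩
  have hBij : ∀ v ∈ W, (F.filter (fun f => f 0 = v)).card
      = (G.filter (fun g => g 0 ≠ v)).card := by
    intro v hv
    rw [hW, Set.mem_toFinset] at hv
    refine Finset.card_nbij' (fun f => Fin.tail f) (fun g => Fin.cons v g) ?_ ?_ ?_ ?_
    · intro f hf
      simp only [hF, hG, Finset.mem_coe, Finset.mem_filter, Finset.mem_univ, true_and] at hf ⊢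
      obtain ⟨⟨⟨hmem, hpair⟩, hU0⟩, h0⟩ := hf
      refine ⟨⟨?_, ?_⟩, ?_⟩
      · intro i
        have := hmem i.succ
        simpa [hs', Fin.val_succ, Fin.tail] using this
      · intro u w huw
        refine hpair u.succ w.succ ?_
        simp only [Fin.val_succ, huw]
      · have h01 := hpair 0 (Fin.succ 0) (by simp)
        rw [← h0]
        exact h01.symm
    · intro g hg
      simp only [hF, hG, Finset.mem_coe, Finset.mem_filter, Finset.mem_univ, true_and] at hg ⊢
      obtain ⟨⟨hmem, hpair⟩, hne⟩ := hg
      refine ⟨⟨⟨?_, ?_⟩, ?_⟩, ?_⟩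
      · intro i
        refine Fin.cases ?_ (fun j => ?_) i
        · simpa using hv.2
        · have := hmem j
          simpa [hs', Fin.val_succ] using this
      · intro u w
        induction u using Fin.cases with
        | zero =>
          induction w using Fin.cases with
          | zero => intro h; simp at h
          | succ w' =>
            intro h
            simp only [Fin.val_zero, Fin.val_succ] at h
            have hw0 : w' = 0 := by
              apply Fin.ext
              simpa using h.symm
            subst hw0
            simp only [Fin.cons_zero, Fin.cons_succ]
            exact fun hc => hne hc.symm
        | succ u' =>
          induction w using Fin.cases with
          | zero => intro h; simp at h
          | succ w' =>
            intro h
            simp only [Fin.val_succ] at h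
            simp only [Fin.cons_succ]
            exact hpair u' w' (Nat.succ_injective h)
      · simpa using hv.1
      · simp
    · intro f hf
      simp only [hF, Finset.mem_coe, Finset.mem_filter] at hf
      rw [← hf.2]
      exact Fin.cons_self_tail f
    · intro g _
      simp
  have key : ∀ v ∈ W, (F.filter (fun f => f 0 = v)).card
      + (G.filter (fun g => g 0 = v)).card = G.card := by
    intro v hv
    rw [hBij v hv, add_comm]
    have := Finset.card_filter_add_card_filter_not (s := G) (p := fun g => g 0 = v)
    simpa using this
  rw [hc1, hc2, hc3, hFib, hFib']
  rw [← Finset.sum_add_distrib]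
  have hsum : ∀ v ∈ W, (F.filter (fun f => f 0 = v)).card
      + ((G.filter (fun g => g 0 ∈ U ∩ s 0)).filter (fun g => g 0 = v)).card = G.card := by
    intro v hv
    rw [hGfib v hv]
    exact key v hv
  rw [Finset.sum_congr rfl hsum, Finset.sum_const, smul_eq_mul]
  congr 1
  rw [hW, Set.ncard_eq_toFinset_card']

/-- The key integer inequality for one step of the induction. -/
lemma key_int (a b t T S x z T' S' : ℤ)
    (hT : 0 ≤ T) (hS : 0 ≤ S) (hxn : 0 ≤ x) (hzn : 0 ≤ z)
    (ha : 1 ≤ a) (hb : 1 ≤ b) (hta : t ≤ a) (htb : t ≤ b)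
    (hx : a * x ≤ t * T) (hz : b * z ≤ t * S)
    (hT' : T' + z = a * S) (hS' : S' + x = b * T) :
    (a - 1) * (b - 1) * (T * S) ≤ T' * S' := by
  have hT'e : T' = a * S - z := by linarith
  have hS'e : S' = b * T - x := by linarith
  have h1 : a * (b - 1) * T ≤ a * b * T - a * x := by nlinarith
  have h2 : b * (a - 1) * S ≤ a * b * S - b * z := by nlinarith
  have h1n : 0 ≤ a * (b - 1) * T := by
    apply mul_nonneg (mul_nonneg (by linarith) (by linarith)) hT
  have h2n : 0 ≤ b * (a - 1) * S := by
    apply mul_nonneg (mul_nonneg (by linarith) (by linarith)) hS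
  have h3 : (a * (b - 1) * T) * (b * (a - 1) * S)
      ≤ (a * b * T - a * x) * (a * b * S - b * z) :=
    mul_le_mul h1 h2 h2n (le_trans h1n h1)
  have h4 : (a * b * T - a * x) * (a * b * S - b * z) = (a * b) * (T' * S') := by
    rw [hT'e, hS'e]; ring
  have h5 : (a * (b - 1) * T) * (b * (a - 1) * S)
      = (a * b) * ((a - 1) * (b - 1) * (T * S)) := by ring
  have hab : 0 < a * b := by positivity
  rw [h5, h4] at h3
  exact le_of_mul_le_mul_left h3 hab

/-- Alternating vertex-set sequence: `A` at even indices, `B` at odd indices. -/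
def alt {q : ℕ} (A B : Set (Fin q)) : ℕ → Set (Fin q) := fun i => if Even i then A else B

lemma alt_zero {q : ℕ} (A B : Set (Fin q)) : alt A B 0 = A := by simp [alt]

lemma alt_shift {q : ℕ} (A B : Set (Fin q)) : (fun i => alt A B (i + 1)) = alt B A := by
  funext i
  by_cases h : Even i <;> simp [alt, h, Nat.even_add_one]

lemma const_shift {q : ℕ} (A : Set (Fin q)) :
    (fun i => (fun _ => A : ℕ → Set (Fin q)) (i + 1)) = (fun _ => A) := rfl

section Main

variable {q : ℕ} (A B : Set (Fin q))

lemma cnt_univ_congr (s : ℕ → Set (Fin q)) (k : ℕ) (U : Set (Fin q)) (h : s 0 ⊆ U) :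
    cnt q s k U = cnt q s k Set.univ := by
  apply cnt_congr
  ext v
  constructor
  · rintro ⟨_, h2⟩; exact ⟨trivial, h2⟩
  · rintro ⟨_, h2⟩; exact ⟨h h2, h2⟩

lemma inter_eq1 : A ∩ B = (A ∩ B) ∩ B := by rw [Set.inter_assoc, Set.inter_self]

lemma inter_eq2 : (A ∩ B) ∩ A = A ∩ B := by
  ext v; constructor
  · rintro ⟨h1, _⟩; exact h1
  · rintro ⟨h1, h2⟩; exact ⟨⟨h1, h2⟩, h1⟩

/-- `cnt (alt B A) k A` equals the count restricted to `A ∩ B`. -/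
lemma cnt_alt_restrict (k : ℕ) : cnt q (alt B A) k A = cnt q (alt B A) k (A ∩ B) := by
  apply cnt_congr
  rw [alt_zero]
  exact inter_eq1 A B

lemma recT (k : ℕ) : cnt q (alt A B) (k + 1) Set.univ + cnt q (alt B A) k (A ∩ B)
    = A.ncard * cnt q (alt B A) k Set.univ := by
  have h := cnt_succ q (alt A B) k Set.univ
  rw [alt_shift, alt_zero, Set.univ_inter, cnt_alt_restrict] at h
  exact h

lemma recX (k : ℕ) : cnt q (alt A B) (k + 1) (A ∩ B) + cnt q (alt B A) k (A ∩ B)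
    = (A ∩ B).ncard * cnt q (alt B A) k Set.univ := by
  have h := cnt_succ q (alt A B) k (A ∩ B)
  rw [alt_shift, alt_zero, inter_eq2] at h
  exact h

lemma recC (k : ℕ) : cnt q (fun _ => A) (k + 1) Set.univ + cnt q (fun _ => A) k Set.univ
    = A.ncard * cnt q (fun _ => A) k Set.univ := by
  have h := cnt_succ q (fun _ => A) k Set.univ
  rw [Set.univ_inter] at h
  rw [show cnt q (fun _ => A) k A = cnt q (fun _ => A) k Set.univ from
    cnt_univ_congr _ k A (fun _ h => h)] at h
  exact h

lemma step1 (a t S z x' T' : ℕ) (E1 : T' + z = a * S) (E2 : x' + z = t * S)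
    (hta : t ≤ a) : a * x' ≤ t * T' := by
  have E1' : (T' : ℤ) + z = a * S := by exact_mod_cast E1
  have E2' : (x' : ℤ) + z = t * S := by exact_mod_cast E2
  have hta' : (t : ℤ) ≤ a := by exact_mod_cast hta
  have hzz : (0 : ℤ) ≤ (z : ℤ) := Int.natCast_nonneg z
  have hG : (a : ℤ) * x' ≤ t * T' := by
    have hx' : (x' : ℤ) = t * S - z := by linarith
    have hT' : (T' : ℤ) = a * S - z := by linarith
    rw [hx', hT']
    nlinarith [mul_nonneg (sub_nonneg.2 hta') hzz]
  exact_mod_cast hG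

lemma step3 (a b t T S x z PA PB T' S' PA' PB' : ℕ)
    (E1 : T' + z = a * S) (E3 : S' + x = b * T)
    (E5 : PA' + PA = a * PA) (E6 : PB' + PB = b * PB)
    (ih1 : a * x ≤ t * T) (ih2 : b * z ≤ t * S) (ih3 : PA * PB ≤ T * S)
    (hta : t ≤ a) (htb : t ≤ b) : PA' * PB' ≤ T' * S' := by
  by_cases ha0 : a = 0
  · have : PA' = 0 := by subst ha0; omega
    rw [this]; simp
  by_cases hb0 : b = 0
  · have : PB' = 0 := by subst hb0; omega
    rw [this]; simp
  have ha1 : (1:ℤ) ≤ (a:ℤ) := by exact_mod_cast Nat.one_le_iff_ne_zero.2 ha0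
  have hb1 : (1:ℤ) ≤ (b:ℤ) := by exact_mod_cast Nat.one_le_iff_ne_zero.2 hb0
  have hta' : (t : ℤ) ≤ a := by exact_mod_cast hta
  have htb' : (t : ℤ) ≤ b := by exact_mod_cast htb
  have hkey := key_int (a:ℤ) b t T S x z T' S'
    (Int.natCast_nonneg T) (Int.natCast_nonneg S) (Int.natCast_nonneg x)
    (Int.natCast_nonneg z) ha1 hb1 hta' htb'
    (by exact_mod_cast ih1) (by exact_mod_cast ih2)
    (by exact_mod_cast E1) (by exact_mod_cast E3)
  have hPA : (PA' : ℤ) = ((a:ℤ) - 1) * PA := by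
    have : (PA' : ℤ) + PA = a * PA := by exact_mod_cast E5
    linarith
  have hPB : (PB' : ℤ) = ((b:ℤ) - 1) * PB := by
    have : (PB' : ℤ) + PB = b * PB := by exact_mod_cast E6
    linarith
  have hG : (PA' : ℤ) * PB' ≤ (T' : ℤ) * S' := by
    rw [hPA, hPB]
    have step1 : ((a:ℤ) - 1) * PA * (((b:ℤ) - 1) * PB) = ((a:ℤ)-1)*((b:ℤ)-1)*((PA:ℤ)*PB) := by
      ring
    rw [step1]
    have hPAB : (PA:ℤ) * PB ≤ (T:ℤ) * S := by exact_mod_cast ih3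
    have hnn : (0:ℤ) ≤ ((a:ℤ)-1)*((b:ℤ)-1) := by
      apply mul_nonneg <;> linarith
    calc ((a:ℤ)-1)*((b:ℤ)-1)*((PA:ℤ)*PB) ≤ ((a:ℤ)-1)*((b:ℤ)-1)*((T:ℤ)*S) :=
          mul_le_mul_of_nonneg_left hPAB hnn
      _ ≤ _ := hkey
  exact_mod_cast hG

lemma main_ind (k : ℕ) :
    (A.ncard * cnt q (alt A B) k (A ∩ B) ≤ (A ∩ B).ncard * cnt q (alt A B) k Set.univ)
    ∧ (B.ncard * cnt q (alt B A) k (A ∩ B) ≤ (A ∩ B).ncard * cnt q (alt B A) k Set.univ)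
    ∧ cnt q (fun _ => A) k Set.univ * cnt q (fun _ => B) k Set.univ
        ≤ cnt q (alt A B) k Set.univ * cnt q (alt B A) k Set.univ := by
  have hBA : B ∩ A = A ∩ B := Set.inter_comm B A
  have hta : (A ∩ B).ncard ≤ A.ncard :=
    Set.ncard_le_ncard Set.inter_subset_left (Set.toFinite A)
  have htb : (A ∩ B).ncard ≤ B.ncard :=
    Set.ncard_le_ncard Set.inter_subset_right (Set.toFinite B)
  induction k with
  | zero =>
    have e1 : A ∩ (A ∩ B) = A ∩ B := by
      rw [← Set.inter_assoc, Set.inter_self]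
    have e2 : B ∩ (A ∩ B) = A ∩ B := by
      rw [Set.inter_comm A B, ← Set.inter_assoc, Set.inter_self]
    simp only [cnt_zero, alt_zero, e1, e2, Set.inter_univ]
    exact ⟨le_of_eq (mul_comm _ _), le_of_eq (mul_comm _ _), le_refl _⟩
  | succ k ih =>
    obtain ⟨ih1, ih2, ih3⟩ := ih
    have E3 := recT B A k
    rw [hBA] at E3
    have E4 := recX B A k
    rw [hBA] at E4
    refine ⟨step1 _ _ _ _ _ _ (recT A B k) (recX A B k) hta,
      step1 _ _ _ _ _ _ E3 E4 htb, ?_⟩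
    exact step3 A.ncard B.ncard (A ∩ B).ncard _ _ _ _ _ _ _ _ _ _
      (recT A B k) E3 (recC A k) (recC B k) ih1 ih2 ih3 hta htb

lemma fin2_eq_iff : ∀ α β c c' : Fin 2, α ≠ β → c ≠ c' → ((α = c) ↔ (β = c')) := by decide

lemma fin2_eq : ∀ a b c : Fin 2, a ≠ c → b ≠ c → a = b := by decide

lemma homCount_eq (q k : ℕ) (A : Set (Fin q)) :
    homCount (pathGraph (k + 1)) ((completeGraph (Fin q)).induce A)
      = cnt q (fun _ => A) k Set.univ := by
  rw [homCount, cnt]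
  apply Nat.card_congr
  refine
    { toFun := fun φ => ⟨fun i => (φ i : Fin q),
        ⟨⟨fun i => (φ i).2, fun u v huv => ?_⟩, trivial⟩⟩
      invFun := fun p => ⟨fun i => ⟨p.1 i, p.2.1.1 i⟩, ?_⟩
      left_inv := fun φ => DFunLike.ext _ _ fun v => Subtype.ext rfl
      right_inv := fun p => Subtype.ext rfl }
  · exact φ.map_rel (pathGraph_adj.mpr (Or.inl huv))
  · intro u v hadj
    rw [pathGraph_adj] at hadj
    rcases hadj with h | h
    · exact p.2.1.2 u v h
    · exact (p.2.1.2 v u h).symm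

lemma homB_eq (q k : ℕ) (A B : Set (Fin q)) :
    homB (pathGraph (k + 1)) (completeGraph (Fin q)) A B
      = cnt q (alt A B) k Set.univ * cnt q (alt B A) k Set.univ := by
  rw [homB, cnt, cnt, ← Nat.card_prod]
  apply Nat.card_congr
  refine
    { toFun := fun f =>
        (⟨fun i => f.1 (i, par i.val), ⟨⟨?_, ?_⟩, trivial⟩⟩,
         ⟨fun i => f.1 (i, par (i.val + 1)), ⟨⟨?_, ?_⟩, trivial⟩⟩)
      invFun := fun p =>
        ⟨⟨fun x => if x.2 = par x.1.val then p.1.1 x.1 else p.2.1 x.1, ?_⟩, ?_, ?_⟩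
      left_inv := ?_
      right_inv := ?_ }
  · -- membership for the first walk
    intro i
    by_cases h : Even i.val
    · have hp : par i.val = 0 := by simp [par, h]
      simpa [alt, h, hp] using f.2.1 i
    · have hp : par i.val = 1 := by simp [par, h]
      simpa [alt, h, hp] using f.2.2 i
  · -- adjacency for the first walk
    intro u v huv
    have hadj : (tensorK2 (pathGraph (k + 1))).Adj (u, par u.val) (v, par v.val) := by
      refine And.intro (pathGraph_adj.mpr (Or.inl huv)) ?_
      show par u.val ≠ par v.val
      rw [← huv]
      exact (par_succ_ne u.val).symm
    exact f.1.map_rel hadj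
  · -- membership for the second walk
    intro i
    by_cases h : Even i.val
    · have hp : par (i.val + 1) = 1 := by simp [par, h, Nat.even_add_one]
      simpa [alt, h, hp] using f.2.2 i
    · have hp : par (i.val + 1) = 0 := by simp [par, h, Nat.even_add_one]
      simpa [alt, h, hp] using f.2.1 i
  · -- adjacency for the second walk
    intro u v huv
    have hadj : (tensorK2 (pathGraph (k + 1))).Adj (u, par (u.val + 1)) (v, par (v.val + 1)) := by
      refine And.intro (pathGraph_adj.mpr (Or.inl huv)) ?_
      show par (u.val + 1) ≠ par (v.val + 1)
      rw [← huv]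
      have h1 : par (u.val + 1 + 1) = par u.val := par_add_two u.val
      rw [h1]
      exact (par_succ_ne u.val)
    exact f.1.map_rel hadj
  · -- the inverse is a homomorphism
    intro x y hxy
    obtain ⟨hpath, hne⟩ : (pathGraph (k + 1)).Adj x.1 y.1 ∧ x.2 ≠ y.2 := hxy
    rw [pathGraph_adj] at hpath
    have hpar : par x.1.val ≠ par y.1.val := by
      rcases hpath with h | h
      · rw [← h]; exact (par_succ_ne x.1.val).symm
      · rw [← h]; exact par_succ_ne y.1.val
    have hiff := fin2_eq_iff x.2 y.2 (par x.1.val) (par y.1.val) hne hpar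
    by_cases hx : x.2 = par x.1.val
    · have hy : y.2 = par y.1.val := hiff.mp hx
      simp only [if_pos hx, if_pos hy]
      rcases hpath with h | h
      · exact p.1.2.1.2 x.1 y.1 h
      · exact (p.1.2.1.2 y.1 x.1 h).symm
    · have hy : ¬ y.2 = par y.1.val := fun hh => hx (hiff.mpr hh)
      simp only [if_neg hx, if_neg hy]
      rcases hpath with h | h
      · exact p.2.2.1.2 x.1 y.1 h
      · exact (p.2.2.1.2 y.1 x.1 h).symm
  · -- first side lands in A
    intro v
    show (if (0 : Fin 2) = par v.val then p.1.1 v else p.2.1 v) ∈ A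
    by_cases h : Even v.val
    · have hp : par v.val = 0 := by simp [par, h]
      simpa [alt, h, hp] using p.1.2.1.1 v
    · have hp : par v.val = 1 := by simp [par, h]
      simpa [alt, h, hp] using p.2.2.1.1 v
  · -- second side lands in B
    intro v
    show (if (1 : Fin 2) = par v.val then p.1.1 v else p.2.1 v) ∈ B
    by_cases h : Even v.val
    · have hp : par v.val = 0 := by simp [par, h]
      simpa [alt, h, hp] using p.2.2.1.1 v
    · have hp : par v.val = 1 := by simp [par, h]
      simpa [alt, h, hp] using p.1.2.1.1 v
  · -- left inverse : `invFun (toFun f) = f`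
    intro f
    beta_reduce
    apply Subtype.ext
    apply DFunLike.ext
    rintro ⟨i, j⟩
    show (if j = par i.val then f.1 (i, par i.val) else f.1 (i, par (i.val + 1))) = f.1 (i, j)
    by_cases hx : j = par i.val
    · rw [if_pos hx, hx]
    · rw [if_neg hx]
      have hj : par (i.val + 1) = j := fin2_eq _ _ _ (par_succ_ne i.val) hx
      rw [hj]
  · -- right inverse : `toFun (invFun p) = p`
    intro p
    beta_reduce
    refine Prod.ext ?_ ?_
    · apply Subtype.ext
      funext i
      show (if par i.val = par i.val then p.1.1 i else p.2.1 i) = p.1.1 i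
      rw [if_pos rfl]
    · apply Subtype.ext
      funext i
      show (if par (i.val + 1) = par i.val then p.1.1 i else p.2.1 i) = p.2.1 i
      rw [if_neg (par_succ_ne i.val)]

end Main

end Stmt15Aux

/-- For every `q ≥ 2`, every path (here on `m ≥ 1` vertices, i.e. of any
length, in particular of odd length `2d−1` and of even length `2d`) is cross-bipartite
swapping in the complete graph `K_q`. -/
theorem stmt15 (q : ℕ) (hq : 2 ≤ q) (m : ℕ) (hm : 1 ≤ m) :
    CrossBipartiteSwapping (pathGraph m) (completeGraph (Fin q)) := by
  obtain ⟨k, rfl⟩ : ∃ k, m = k + 1 := ⟨m - 1, by omega⟩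
  intro A B
  rw [Stmt15Aux.homCount_eq, Stmt15Aux.homCount_eq, Stmt15Aux.homB_eq]
  exact (Stmt15Aux.main_ind A B k).2.2
end

section
/- For all k ≥ 1, all positive integers r_1,…,r_k, and all q ≥ 1, the complete multipartite graph K(r_1,…,r_k) is cross-bipartite swapping in the complete graph K_q: for all A, B ⊆ V(K_q), hom(K(r_1,…,r_k), K_q[A]) · hom(K(r_1,…,r_k), K_q[B]) ≤ hom_b(K(r_1,…,r_k) × K_2, K_q[A,B]). -/
set_option linter.unusedSectionVars false
set_option linter.unusedVariables false
set_option maxHeartbeats 1000000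


open SimpleGraph

open Finset

namespace CBS

variable {α : Type} [Fintype α] [DecidableEq α]

/-- The image of a tuple of elements of a finset, as a finset of the ambient type. -/
def img {n : ℕ} {A : Finset α} (x : Fin n → ↥A) : Finset α :=
  Finset.univ.image fun i => (x i : α)

lemma img_subset {n : ℕ} {A : Finset α} (x : Fin n → ↥A) : img x ⊆ A := by
  intro a ha
  simp only [img, mem_image] at ha
  obtain ⟨i, _, rfl⟩ := ha
  exact (x i).2

lemma card_img {n : ℕ} {A : Finset α} (x : Fin n → ↥A) :
    (img x).card = (Finset.univ.image x).card := by
  rw [img, ← Function.comp_def (fun a : ↥A => (a : α)) x, ← Finset.image_image]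
  exact Finset.card_image_of_injective _ Subtype.val_injective

/-- Count of proper colorings (size-based form). -/
def NpcC : List ℕ → ℕ → ℕ
  | [], _ => 1
  | r :: L, m => ∑ x : Fin r → Fin m, NpcC L (m - (Finset.univ.image x).card)

/-- Count of proper colorings of the complete multipartite graph with parts `L`,
into the palette `A`. -/
def Npc : List ℕ → Finset α → ℕ
  | [], _ => 1
  | r :: L, A => ∑ x : Fin r → ↥A, Npc L (A \ img x)

/-- Count of cross-valid pairs. -/
def Rpc : List ℕ → Finset α → Finset α → ℕ
  | [], _, _ => 1
  | r :: L, A, B =>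
      ∑ z : (Fin r → ↥A) × (Fin r → ↥B), Rpc L (A \ img z.2) (B \ img z.1)

lemma Npc_eq_NpcC : ∀ (L : List ℕ) (A : Finset α), Npc L A = NpcC L A.card
  | [], _ => rfl
  | r :: L, A => by
    rw [Npc, NpcC]
    refine Fintype.sum_equiv (Equiv.arrowCongr (Equiv.refl _) A.equivFin) _ _ fun x => ?_
    rw [Npc_eq_NpcC L]
    congr 1
    rw [Finset.card_sdiff_of_subset (img_subset x), card_img]
    congr 1
    have : ⇑(Equiv.arrowCongr (Equiv.refl (Fin r)) A.equivFin) x = fun i => A.equivFin (x i) := by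
      ext i; simp [Equiv.arrowCongr]
    rw [this, ← Function.comp_def (⇑A.equivFin) x, ← Finset.image_image,
      Finset.card_image_of_injective _ A.equivFin.injective]

lemma NpcC_mono (L : List ℕ) : Monotone (NpcC L) := by
  induction L with
  | nil => exact fun _ _ _ => le_rfl
  | cons r L ih =>
    intro m m' h
    rw [NpcC, NpcC]
    have hinj : Function.Injective (fun x : Fin r → Fin m => Fin.castLE h ∘ x) := by
      intro a b hab
      funext i
      exact Fin.castLE_injective h (congrFun hab i)
    calc ∑ x : Fin r → Fin m, NpcC L (m - (Finset.univ.image x).card)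
        ≤ ∑ x : Fin r → Fin m, NpcC L (m' - (Finset.univ.image (Fin.castLE h ∘ x)).card) := by
          refine Finset.sum_le_sum fun x _ => ?_
          rw [← Finset.image_image, Finset.card_image_of_injective _ (Fin.castLE_injective h)]
          exact ih (Nat.sub_le_sub_right h _)
      _ = ∑ y ∈ Finset.univ.map ⟨_, hinj⟩, NpcC L (m' - (Finset.univ.image y).card) := by
          rw [Finset.sum_map]
          rfl
      _ ≤ ∑ y : Fin r → Fin m', NpcC L (m' - (Finset.univ.image y).card) :=
          Finset.sum_le_sum_of_subset (Finset.subset_univ _)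

lemma img_cons {n : ℕ} {A : Finset α} (a : ↥A) (x : Fin n → ↥A) :
    img (Fin.cons a x) = insert (↑a) (img x) := by
  ext c
  simp only [img, mem_image, mem_insert, mem_univ, true_and]
  constructor
  · rintro ⟨i, rfl⟩
    induction i using Fin.cases with
    | zero => left; rw [Fin.cons_zero]
    | succ j => right; exact ⟨j, by rw [Fin.cons_succ]⟩
  · rintro (rfl | ⟨j, rfl⟩)
    · exact ⟨0, by rw [Fin.cons_zero]⟩
    · exact ⟨j.succ, by rw [Fin.cons_succ]⟩

lemma sum_pi_succ {β : Type} [Fintype β] [DecidableEq β] {n : ℕ} (f : (Fin (n+1) → β) → ℕ) :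
    ∑ x : Fin (n+1) → β, f x = ∑ a : β, ∑ x : Fin n → β, f (Fin.cons a x) := by
  have h := Fintype.sum_equiv (Fin.consEquiv fun _ => β) (fun p => f (Fin.cons p.1 p.2)) f
    (fun p => rfl)
  rw [← h, Fintype.sum_prod_type]

end CBS

namespace CBS

variable {α : Type} [Fintype α] [DecidableEq α]

/-- `∑` over tuples from `W` of `F(|D \ image|)`. -/
def Tsum (F : ℕ → ℕ) (W D : Finset α) (r : ℕ) : ℕ :=
  ∑ x : Fin r → ↥W, F ((D \ img x).card)

lemma Tsum_mono (F : ℕ → ℕ) (hF : Monotone F) (W : Finset α) {D D' : Finset α}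
    (h : D ⊆ D') (r : ℕ) : Tsum F W D r ≤ Tsum F W D' r :=
  Finset.sum_le_sum fun x _ =>
    hF (card_le_card (Finset.sdiff_subset_sdiff h (le_refl _)))

lemma Tsum_succ (F : ℕ → ℕ) (W D : Finset α) (r : ℕ) :
    Tsum F W D (r + 1) = ∑ w : ↥W, Tsum F W (D.erase ↑w) r := by
  rw [Tsum, sum_pi_succ (fun x : Fin (r+1) → ↥W => F ((D \ img x).card))]
  refine Finset.sum_congr rfl fun w _ => Finset.sum_congr rfl fun x _ => ?_
  rw [img_cons, Finset.sdiff_insert, ← Finset.erase_sdiff_comm]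

lemma Tsum_zero (F : ℕ → ℕ) (W D : Finset α) : Tsum F W D 0 = F D.card := by
  rw [Tsum]
  have : ∀ x : Fin 0 → ↥W, D \ img x = D := fun x => by simp [img]
  calc ∑ x : Fin 0 → ↥W, F ((D \ img x).card) = ∑ _x : Fin 0 → ↥W, F D.card :=
        Finset.sum_congr rfl fun x _ => by rw [this]
    _ = F D.card := by
        rw [Finset.sum_const, Finset.card_univ, smul_eq_mul]
        simp

lemma nat_help1 {a b c d : ℕ} (h : a + b = c + d) (h2 : d ≤ b) : a ≤ c := by omega

lemma mass_ineq (U W C : Finset α) (hCW : C ⊆ W) (hWC : W \ C ⊆ U) :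
    W.card * (U ∩ C).card ≤ U.card * C.card := by
  rcases le_total W.card U.card with h | h
  · exact Nat.mul_le_mul h (card_le_card inter_subset_right)
  · have h1 : W \ U ⊆ C \ U := by
      intro z hz
      rw [mem_sdiff] at hz ⊢
      refine ⟨?_, hz.2⟩
      by_contra hzC
      exact hz.2 (hWC (mem_sdiff.mpr ⟨hz.1, hzC⟩))
    have h2 : W.card - U.card ≤ (C \ U).card :=
      le_trans (Finset.le_card_sdiff U W) (card_le_card h1)
    have h3 : (U ∩ C).card ≤ U.card := card_le_card inter_subset_left
    have h4 : (C ∩ U).card + (C \ U).card = C.card := Finset.card_inter_add_card_sdiff C U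
    have h5 : (U ∩ C).card = (C ∩ U).card := by rw [inter_comm]
    calc W.card * (U ∩ C).card
        = U.card * (U ∩ C).card + (W.card - U.card) * (U ∩ C).card := by
          rw [← Nat.add_mul, Nat.add_sub_cancel' h]
      _ ≤ U.card * (U ∩ C).card + (C \ U).card * U.card :=
          Nat.add_le_add_left (Nat.mul_le_mul h2 h3) _
      _ = U.card * ((U ∩ C).card + (C \ U).card) := by ring
      _ = U.card * C.card := by rw [h5, h4]

lemma final_numeric (Uc Wc c' cap usd T₀ T₁ : ℕ)
    (h1 : Wc * cap ≤ Uc * c') (h2 : T₁ ≤ T₀) (h3 : c' ≤ Wc) (h4 : cap + usd = Uc) :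
    Uc * (c' * T₁ + (Wc - c') * T₀) ≤ Wc * cap * T₁ + Wc * usd * T₀ := by
  obtain ⟨t, rfl⟩ := Nat.exists_eq_add_of_le h2
  have e1 : Uc * c' + Uc * (Wc - c') = Uc * Wc := by
    rw [← Nat.mul_add, Nat.add_sub_cancel' h3]
  have e2 : Wc * cap + Wc * usd = Wc * Uc := by rw [← Nat.mul_add, h4]
  have e3 : Uc * (Wc - c') ≤ Wc * usd := by
    refine nat_help1 (b := Uc * c') (d := Wc * cap) ?_ h1
    rw [Nat.add_comm (Uc * (Wc - c')), e1, Nat.add_comm (Wc * usd), e2, Nat.mul_comm]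
  calc Uc * (c' * T₁ + (Wc - c') * (T₁ + t))
      = (Uc * c' + Uc * (Wc - c')) * T₁ + Uc * (Wc - c') * t := by ring
    _ = Uc * Wc * T₁ + Uc * (Wc - c') * t := by rw [e1]
    _ ≤ Uc * Wc * T₁ + Wc * usd * t :=
        Nat.add_le_add_left (Nat.mul_le_mul_right t e3) _
    _ = (Wc * cap + Wc * usd) * T₁ + Wc * usd * t := by rw [e2, Nat.mul_comm Wc Uc]
    _ = Wc * cap * T₁ + Wc * usd * (T₁ + t) := by ring

lemma dom (F : ℕ → ℕ) (hF : Monotone F) :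
    ∀ (r : ℕ) (U W C C' : Finset α), C ⊆ W → C' ⊆ W → W \ C ⊆ U → C.card = C'.card →
      U.card ^ r * Tsum F W C' r ≤ W.card ^ r * Tsum F U C r := by
  intro r
  induction r with
  | zero =>
    intro U W C C' hCW hC'W hWC hcard
    simp only [pow_zero, one_mul, Tsum_zero, hcard, le_refl]
  | succ r ih =>
    intro U W C C' hCW hC'W hWC hcard
    rw [Tsum_succ, Tsum_succ]
    by_cases hC' : C' = ∅
    · have hC : C = ∅ := card_eq_zero.mp (by rw [hcard, hC', card_empty])
      subst hC'
      subst hC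
      simp only [erase_empty]
      rw [Finset.sum_const, Finset.sum_const, smul_eq_mul, smul_eq_mul, Finset.card_univ,
        Finset.card_univ, Fintype.card_coe, Fintype.card_coe]
      have hIH := ih U W ∅ ∅ (empty_subset _) (empty_subset _) hWC rfl
      calc U.card ^ (r+1) * (W.card * Tsum F W ∅ r)
          = (U.card * W.card) * (U.card ^ r * Tsum F W ∅ r) := by ring
        _ ≤ (U.card * W.card) * (W.card ^ r * Tsum F U ∅ r) := Nat.mul_le_mul_left _ hIH
        _ = W.card ^ (r+1) * (U.card * Tsum F U ∅ r) := by ring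
    · have hC'ne : C'.Nonempty := nonempty_iff_ne_empty.mpr hC'
      obtain ⟨w₀, hw₀, hmax⟩ :=
        Finset.exists_max_image C' (fun w => Tsum F W (C'.erase w) r) hC'ne
      have hT10 : Tsum F W (C'.erase w₀) r ≤ Tsum F W C' r :=
        Tsum_mono F hF W (erase_subset _ _) r
      -- bound on the W-side sum
      have B1 : (∑ w : ↥W, Tsum F W (C'.erase ↑w) r) ≤
          C'.card * Tsum F W (C'.erase w₀) r + (W.card - C'.card) * Tsum F W C' r := by
        calc (∑ w : ↥W, Tsum F W (C'.erase ↑w) r)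
            ≤ ∑ w : ↥W, (if (w : α) ∈ C' then Tsum F W (C'.erase w₀) r
                else Tsum F W C' r) := by
              refine Finset.sum_le_sum fun w _ => ?_
              by_cases hw : (w : α) ∈ C'
              · rw [if_pos hw]; exact hmax _ hw
              · rw [if_neg hw, Finset.erase_eq_of_notMem hw]
          _ = ∑ w ∈ W, (if w ∈ C' then Tsum F W (C'.erase w₀) r else Tsum F W C' r) :=
              Finset.sum_coe_sort W
                (fun w => if w ∈ C' then Tsum F W (C'.erase w₀) r else Tsum F W C' r)
          _ = C'.card * Tsum F W (C'.erase w₀) r + (W.card - C'.card) * Tsum F W C' r := by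
              rw [Finset.sum_ite, Finset.sum_const, Finset.sum_const,
                Finset.filter_mem_eq_inter, Finset.inter_eq_right.mpr hC'W,
                ← Finset.sdiff_eq_filter, Finset.card_sdiff_of_subset hC'W, smul_eq_mul, smul_eq_mul]
      -- decomposition of the U-side sum
      have B2 : (∑ u : ↥U, Tsum F U (C.erase ↑u) r) =
          (∑ u ∈ U ∩ C, Tsum F U (C.erase u) r) + (U \ C).card * Tsum F U C r := by
        calc (∑ u : ↥U, Tsum F U (C.erase ↑u) r)
            = ∑ u ∈ U, Tsum F U (C.erase u) r :=
              Finset.sum_coe_sort U (fun u => Tsum F U (C.erase u) r)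
          _ = (∑ u ∈ U.filter (· ∈ C), Tsum F U (C.erase u) r) +
              ∑ u ∈ U.filter (· ∉ C), Tsum F U (C.erase u) r :=
              (Finset.sum_filter_add_sum_filter_not U (· ∈ C)
                (fun u => Tsum F U (C.erase u) r)).symm
          _ = (∑ u ∈ U ∩ C, Tsum F U (C.erase u) r) + (U \ C).card * Tsum F U C r := by
              rw [Finset.filter_mem_eq_inter, ← Finset.sdiff_eq_filter]
              congr 1
              calc (∑ u ∈ U \ C, Tsum F U (C.erase u) r)
                  = ∑ _u ∈ U \ C, Tsum F U C r :=
                    Finset.sum_congr rfl fun u hu => by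
                      rw [Finset.erase_eq_of_notMem (mem_sdiff.mp hu).2]
                _ = (U \ C).card * Tsum F U C r := by rw [Finset.sum_const, smul_eq_mul]
      -- per-term induction hypotheses
      have hCne : C.Nonempty := card_pos.mp (by rw [hcard]; exact card_pos.mpr hC'ne)
      have hIH1 : ∀ u ∈ U ∩ C,
          U.card ^ r * Tsum F W (C'.erase w₀) r ≤ W.card ^ r * Tsum F U (C.erase u) r := by
        intro u hu
        rw [mem_inter] at hu
        refine ih U W (C.erase u) (C'.erase w₀) ((erase_subset _ _).trans hCW)
          ((erase_subset _ _).trans hC'W) ?_ ?_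
        · intro z hz
          rw [mem_sdiff, Finset.mem_erase] at hz
          push_neg at hz
          by_cases hzu : z = (u : α)
          · rw [hzu]; exact hu.1
          · exact hWC (mem_sdiff.mpr ⟨hz.1, hz.2 hzu⟩)
        · rw [card_erase_of_mem hu.2, card_erase_of_mem hw₀, hcard]
      have hIH0 : U.card ^ r * Tsum F W C' r ≤ W.card ^ r * Tsum F U C r :=
        ih U W C C' hCW hC'W hWC hcard
      -- mass inequality
      have hmass : W.card * (U ∩ C).card ≤ U.card * C'.card := by
        rw [← hcard]; exact mass_ineq U W C hCW hWC
      have hcap : (U ∩ C).card + (U \ C).card = U.card := Finset.card_inter_add_card_sdiff U C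
      -- assemble
      calc U.card ^ (r+1) * (∑ w : ↥W, Tsum F W (C'.erase ↑w) r)
          ≤ U.card ^ (r+1) * (C'.card * Tsum F W (C'.erase w₀) r +
              (W.card - C'.card) * Tsum F W C' r) := Nat.mul_le_mul_left _ B1
        _ = U.card ^ r * (U.card * (C'.card * Tsum F W (C'.erase w₀) r +
              (W.card - C'.card) * Tsum F W C' r)) := by ring
        _ ≤ U.card ^ r * (W.card * (U ∩ C).card * Tsum F W (C'.erase w₀) r +
              W.card * (U \ C).card * Tsum F W C' r) := by
            refine Nat.mul_le_mul_left _ ?_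
            exact final_numeric U.card W.card C'.card (U ∩ C).card (U \ C).card
              (Tsum F W C' r) (Tsum F W (C'.erase w₀) r) hmass hT10
              (card_le_card hC'W) hcap
        _ = (W.card * ((U ∩ C).card * (U.card ^ r * Tsum F W (C'.erase w₀) r))) +
              W.card * ((U \ C).card * (U.card ^ r * Tsum F W C' r)) := by ring
        _ ≤ (W.card * (∑ u ∈ U ∩ C, W.card ^ r * Tsum F U (C.erase u) r)) +
              W.card * ((U \ C).card * (W.card ^ r * Tsum F U C r)) := by
            refine Nat.add_le_add ?_ ?_
            · refine Nat.mul_le_mul_left _ ?_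
              calc (U ∩ C).card * (U.card ^ r * Tsum F W (C'.erase w₀) r)
                  = ∑ _u ∈ U ∩ C, U.card ^ r * Tsum F W (C'.erase w₀) r := by
                    rw [Finset.sum_const, smul_eq_mul]
                _ ≤ ∑ u ∈ U ∩ C, W.card ^ r * Tsum F U (C.erase u) r :=
                    Finset.sum_le_sum hIH1
            · exact Nat.mul_le_mul_left _ (Nat.mul_le_mul_left _ hIH0)
        _ = W.card ^ (r+1) * ((∑ u ∈ U ∩ C, Tsum F U (C.erase u) r) +
              (U \ C).card * Tsum F U C r) := by
            have h6 : (W.card * ∑ u ∈ U ∩ C, W.card ^ r * Tsum F U (C.erase u) r)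
                = ∑ u ∈ U ∩ C, W.card ^ (r+1) * Tsum F U (C.erase u) r := by
              rw [Finset.mul_sum]
              exact Finset.sum_congr rfl fun u _ => by ring
            rw [h6, ← Finset.mul_sum,
              show W.card * ((U \ C).card * (W.card ^ r * Tsum F U C r))
                = W.card ^ (r+1) * ((U \ C).card * Tsum F U C r) from by ring,
              ← Nat.mul_add]
        _ = W.card ^ (r+1) * (∑ u : ↥U, Tsum F U (C.erase ↑u) r) := by rw [← B2]

end CBS

namespace CBS

variable {α : Type} [Fintype α] [DecidableEq α]

lemma Tsum_empty (F : ℕ → ℕ) {r : ℕ} (hr : r ≠ 0) (D : Finset α) :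
    Tsum F (∅ : Finset α) D r = 0 := by
  rw [Tsum]
  haveI h1 : IsEmpty ↥(∅ : Finset α) := ⟨fun a => absurd a.2 (notMem_empty _)⟩
  haveI h2 : IsEmpty (Fin r → ↥(∅ : Finset α)) :=
    isEmpty_pi.mpr ⟨⟨0, Nat.pos_of_ne_zero hr⟩, h1⟩
  rw [Finset.univ_eq_empty, Finset.sum_empty]

lemma Npc_cons_eq_Tsum (r : ℕ) (L : List ℕ) (A : Finset α) :
    Npc (r :: L) A = Tsum (NpcC L) A A r := by
  rw [Npc, Tsum]
  exact Finset.sum_congr rfl fun x _ => Npc_eq_NpcC L _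

theorem core (L : List ℕ) : ∀ A B : Finset α, Npc L A * Npc L B ≤ Rpc L A B := by
  induction L with
  | nil => intro A B; simp [Npc, Rpc]
  | cons r L ih =>
    intro A B
    have hfac : (∑ y : Fin r → ↥B, Npc L (A \ img y)) * (∑ x : Fin r → ↥A, Npc L (B \ img x))
        ≤ Rpc (r :: L) A B := by
      rw [Rpc, Fintype.sum_prod_type, Finset.sum_mul_sum]
      conv_lhs => rw [Finset.sum_comm]
      exact Finset.sum_le_sum fun x _ => Finset.sum_le_sum fun y _ => ih _ _
    have key : Npc (r :: L) A * Npc (r :: L) B ≤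
        (∑ y : Fin r → ↥B, Npc L (A \ img y)) * (∑ x : Fin r → ↥A, Npc L (B \ img x)) := by
      have e3 : (∑ y : Fin r → ↥B, Npc L (A \ img y)) = Tsum (NpcC L) B A r :=
        Finset.sum_congr rfl fun y _ => Npc_eq_NpcC L _
      have e4 : (∑ x : Fin r → ↥A, Npc L (B \ img x)) = Tsum (NpcC L) A B r :=
        Finset.sum_congr rfl fun x _ => Npc_eq_NpcC L _
      rw [Npc_cons_eq_Tsum, Npc_cons_eq_Tsum, e3, e4]
      have D1 : B.card ^ r * Tsum (NpcC L) A A r ≤ A.card ^ r * Tsum (NpcC L) B A r :=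
        dom (NpcC L) (NpcC_mono L) r B A A A (subset_refl _) (subset_refl _)
          (by rw [sdiff_self]; exact empty_subset _) rfl
      have D2 : A.card ^ r * Tsum (NpcC L) B B r ≤ B.card ^ r * Tsum (NpcC L) A B r :=
        dom (NpcC L) (NpcC_mono L) r A B B B (subset_refl _) (subset_refl _)
          (by rw [sdiff_self]; exact empty_subset _) rfl
      by_cases hz : A.card ^ r * B.card ^ r = 0
      · rcases Nat.mul_eq_zero.mp hz with h | h
        · have hr0 : r ≠ 0 := by rintro rfl; simp at h
          have hA : A = ∅ := card_eq_zero.mp (by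
            exact pow_eq_zero_iff hr0 |>.mp h)
          rw [hA, Tsum_empty (NpcC L) hr0, Nat.zero_mul]
          exact Nat.zero_le _
        · have hr0 : r ≠ 0 := by rintro rfl; simp at h
          have hB : B = ∅ := card_eq_zero.mp (by
            exact pow_eq_zero_iff hr0 |>.mp h)
          rw [hB, Tsum_empty (NpcC L) hr0, Nat.mul_zero]
          exact Nat.zero_le _
      · have hpos : 0 < A.card ^ r * B.card ^ r := Nat.pos_of_ne_zero hz
        refine Nat.le_of_mul_le_mul_left ?_ hpos
        calc (A.card ^ r * B.card ^ r) * (Tsum (NpcC L) A A r * Tsum (NpcC L) B B r)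
            = (B.card ^ r * Tsum (NpcC L) A A r) * (A.card ^ r * Tsum (NpcC L) B B r) := by
              ring
          _ ≤ (A.card ^ r * Tsum (NpcC L) B A r) * (B.card ^ r * Tsum (NpcC L) A B r) :=
              Nat.mul_le_mul D1 D2
          _ = (A.card ^ r * B.card ^ r) * (Tsum (NpcC L) B A r * Tsum (NpcC L) A B r) := by
              ring
    exact le_trans key hfac

end CBS

namespace CBS

variable {q : ℕ}

/-- Proper colorings of the complete multipartite graph, concrete form. -/
def PF (k : ℕ) (r : Fin k → ℕ) (A : Finset (Fin q)) : Type :=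
  {f : (Σ i : Fin k, Fin (r i)) → Fin q //
    (∀ v, f v ∈ A) ∧ ∀ u v : (Σ i : Fin k, Fin (r i)), u.1 ≠ v.1 → f u ≠ f v}

/-- Cross-valid pairs, concrete form. -/
def QF (k : ℕ) (r : Fin k → ℕ) (A B : Finset (Fin q)) : Type :=
  {p : ((Σ i : Fin k, Fin (r i)) → Fin q) × ((Σ i : Fin k, Fin (r i)) → Fin q) //
    (∀ v, p.1 v ∈ A) ∧ (∀ v, p.2 v ∈ B) ∧
      ∀ u v : (Σ i : Fin k, Fin (r i)), u.1 ≠ v.1 → p.1 u ≠ p.2 v}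

instance (k : ℕ) (r : Fin k → ℕ) (A : Finset (Fin q)) : Finite (PF k r A) := by
  unfold PF; infer_instance

instance (k : ℕ) (r : Fin k → ℕ) (A B : Finset (Fin q)) : Finite (QF k r A B) := by
  unfold QF; infer_instance

noncomputable instance (k : ℕ) (r : Fin k → ℕ) (A : Finset (Fin q)) : Fintype (PF k r A) :=
  Fintype.ofFinite _

noncomputable instance (k : ℕ) (r : Fin k → ℕ) (A B : Finset (Fin q)) :
    Fintype (QF k r A B) := Fintype.ofFinite _

lemma card_eq_sum_fibers {γ β : Type} [Fintype γ] [Fintype β] [DecidableEq β] (π : γ → β) :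
    Fintype.card γ = ∑ b : β, Nat.card {g : γ // π g = b} := by
  classical
  rw [← Finset.card_univ,
    Finset.card_eq_sum_card_fiberwise (fun x _ => Finset.mem_univ (π x))]
  refine Finset.sum_congr rfl fun b _ => ?_
  rw [Nat.card_eq_fintype_card, Fintype.card_subtype]

/-- Glue a part-0 coloring with a coloring of the remaining parts. -/
def glueFun {k : ℕ} {r : Fin (k+1) → ℕ} (x0 : Fin (r 0) → Fin q)
    (g : (Σ i : Fin k, Fin (r i.succ)) → Fin q) : (Σ i : Fin (k+1), Fin (r i)) → Fin q :=
  fun v => Fin.cases (motive := fun i => Fin (r i) → Fin q) x0 (fun j a => g ⟨j, a⟩) v.1 v.2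

@[simp] lemma glueFun_zero {k : ℕ} {r : Fin (k+1) → ℕ} (x0 : Fin (r 0) → Fin q)
    (g : (Σ i : Fin k, Fin (r i.succ)) → Fin q) (a : Fin (r 0)) :
    glueFun x0 g ⟨0, a⟩ = x0 a := by
  simp [glueFun]

@[simp] lemma glueFun_succ {k : ℕ} {r : Fin (k+1) → ℕ} (x0 : Fin (r 0) → Fin q)
    (g : (Σ i : Fin k, Fin (r i.succ)) → Fin q) (j : Fin k) (a : Fin (r j.succ)) :
    glueFun x0 g ⟨j.succ, a⟩ = g ⟨j, a⟩ := by
  simp [glueFun]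

/-- Part-0 restriction map on proper colorings. -/
def pf0 {k : ℕ} {r : Fin (k+1) → ℕ} {A : Finset (Fin q)} (f : PF (k+1) r A) :
    Fin (r 0) → ↥A := fun a => ⟨f.1 ⟨0, a⟩, f.2.1 _⟩

noncomputable def pfFiberEquiv (k : ℕ) (r : Fin (k+1) → ℕ) (A : Finset (Fin q))
    (x : Fin (r 0) → ↥A) :
    {f : PF (k+1) r A // pf0 f = x} ≃ PF k (fun i => r i.succ) (A \ img x) where
  toFun f :=
    ⟨fun v => f.1.1 ⟨v.1.succ, v.2⟩,
     fun v => by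
        rw [Finset.mem_sdiff]
        refine ⟨f.1.2.1 _, ?_⟩
        simp only [img, Finset.mem_image, Finset.mem_univ, true_and]
        rintro ⟨i, hi⟩
        have hx : (x i : Fin q) = f.1.1 ⟨0, i⟩ :=
          (congrArg Subtype.val (congrFun f.2 i)).symm
        rw [hx] at hi
        exact f.1.2.2 ⟨0, i⟩ ⟨v.1.succ, v.2⟩ (by simp [(Fin.succ_ne_zero v.1).symm]) hi,
     fun u v huv => f.1.2.2 _ _ (by simpa using huv)⟩
  invFun g :=
    ⟨⟨glueFun (fun a => ↑(x a)) g.1,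
      by
        rintro ⟨i, a⟩
        induction i using Fin.cases with
        | zero => rw [glueFun_zero]; exact (x a).2
        | succ j => rw [glueFun_succ]; exact (Finset.mem_sdiff.mp (g.2.1 ⟨j, a⟩)).1,
      by
        rintro ⟨i, a⟩ ⟨j, b⟩ hne
        induction i using Fin.cases with
        | zero =>
          induction j using Fin.cases with
          | zero => exact absurd rfl hne
          | succ j' =>
            rw [glueFun_zero, glueFun_succ]
            intro heq
            have hg := (Finset.mem_sdiff.mp (g.2.1 ⟨j', b⟩)).2
            refine hg ?_
            simp only [img, Finset.mem_image, Finset.mem_univ, true_and]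
            exact ⟨a, heq⟩
        | succ i' =>
          induction j using Fin.cases with
          | zero =>
            rw [glueFun_zero, glueFun_succ]
            intro heq
            have hg := (Finset.mem_sdiff.mp (g.2.1 ⟨i', a⟩)).2
            refine hg ?_
            simp only [img, Finset.mem_image, Finset.mem_univ, true_and]
            exact ⟨b, heq.symm⟩
          | succ j' =>
            rw [glueFun_succ, glueFun_succ]
            exact g.2.2 ⟨i', a⟩ ⟨j', b⟩ (by simpa using hne)⟩,
     by
      funext a
      apply Subtype.ext
      show glueFun (fun a => ↑(x a)) g.1 ⟨0, a⟩ = ↑(x a)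
      rw [glueFun_zero]⟩
  left_inv f := by
    apply Subtype.ext
    apply Subtype.ext
    funext v
    rcases v with ⟨i, a⟩
    induction i using Fin.cases with
    | zero =>
      exact (glueFun_zero (fun a => ↑(x a)) (fun v => f.1.1 ⟨v.1.succ, v.2⟩) a).trans
        ((congrArg Subtype.val (congrFun f.2 a)).symm)
    | succ j =>
      exact glueFun_succ (fun a => ↑(x a)) (fun v => f.1.1 ⟨v.1.succ, v.2⟩) j a
  right_inv g := by
    apply Subtype.ext
    funext v
    rcases v with ⟨j, a⟩
    exact glueFun_succ (fun a => ↑(x a)) g.1 j a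

end CBS

namespace CBS

variable {q : ℕ}

lemma cardPF : ∀ (k : ℕ) (r : Fin k → ℕ) (A : Finset (Fin q)),
    Nat.card (PF k r A) = Npc (List.ofFn r) A := by
  intro k
  induction k with
  | zero =>
    intro r A
    rw [List.ofFn_zero]
    have e : PF 0 r A ≃ Unit :=
      { toFun := fun _ => ()
        invFun := fun _ => ⟨fun v => v.1.elim0, fun v => v.1.elim0, fun u v _ => u.1.elim0⟩
        left_inv := fun f => Subtype.ext (funext fun v => v.1.elim0)
        right_inv := fun _ => rfl }
    rw [Nat.card_congr e, Nat.card_eq_fintype_card, Fintype.card_unit]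
    simp [Npc]
  | succ k ih =>
    intro r A
    rw [Nat.card_eq_fintype_card, card_eq_sum_fibers (pf0 (r := r) (A := A)),
      List.ofFn_succ, Npc]
    refine Finset.sum_congr rfl fun x _ => ?_
    rw [Nat.card_congr (pfFiberEquiv k r A x), ih]

/-- Part-0 restriction for pairs. -/
def qf0 {k : ℕ} {r : Fin (k+1) → ℕ} {A B : Finset (Fin q)} (f : QF (k+1) r A B) :
    (Fin (r 0) → ↥A) × (Fin (r 0) → ↥B) :=
  (fun a => ⟨f.1.1 ⟨0, a⟩, f.2.1 _⟩, fun a => ⟨f.1.2 ⟨0, a⟩, f.2.2.1 _⟩)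

noncomputable def qfFiberEquiv (k : ℕ) (r : Fin (k+1) → ℕ) (A B : Finset (Fin q))
    (z : (Fin (r 0) → ↥A) × (Fin (r 0) → ↥B)) :
    {f : QF (k+1) r A B // qf0 f = z} ≃
      QF k (fun i => r i.succ) (A \ img z.2) (B \ img z.1) where
  toFun f :=
    ⟨(fun v => f.1.1.1 ⟨v.1.succ, v.2⟩, fun v => f.1.1.2 ⟨v.1.succ, v.2⟩),
     fun v => by
        rw [Finset.mem_sdiff]
        refine ⟨f.1.2.1 _, ?_⟩
        simp only [img, Finset.mem_image, Finset.mem_univ, true_and]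
        rintro ⟨i, hi⟩
        have hx : (z.2 i : Fin q) = f.1.1.2 ⟨0, i⟩ :=
          (congrArg Subtype.val (congrFun (congrArg Prod.snd f.2) i)).symm
        rw [hx] at hi
        exact f.1.2.2.2 ⟨v.1.succ, v.2⟩ ⟨0, i⟩ (by simp [Fin.succ_ne_zero v.1]) hi.symm,
     fun v => by
        rw [Finset.mem_sdiff]
        refine ⟨f.1.2.2.1 _, ?_⟩
        simp only [img, Finset.mem_image, Finset.mem_univ, true_and]
        rintro ⟨i, hi⟩
        have hx : (z.1 i : Fin q) = f.1.1.1 ⟨0, i⟩ :=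
          (congrArg Subtype.val (congrFun (congrArg Prod.fst f.2) i)).symm
        rw [hx] at hi
        exact f.1.2.2.2 ⟨0, i⟩ ⟨v.1.succ, v.2⟩ (by simp [(Fin.succ_ne_zero v.1).symm]) hi,
     fun u v huv => f.1.2.2.2 _ _ (by simpa using huv)⟩
  invFun g :=
    ⟨⟨(glueFun (fun a => ↑(z.1 a)) g.1.1, glueFun (fun a => ↑(z.2 a)) g.1.2),
      by
        rintro ⟨i, a⟩
        show glueFun (fun a => ↑(z.1 a)) g.1.1 ⟨i, a⟩ ∈ A
        induction i using Fin.cases with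
        | zero => rw [glueFun_zero]; exact (z.1 a).2
        | succ j => rw [glueFun_succ]; exact (Finset.mem_sdiff.mp (g.2.1 ⟨j, a⟩)).1,
      by
        rintro ⟨i, a⟩
        show glueFun (fun a => ↑(z.2 a)) g.1.2 ⟨i, a⟩ ∈ B
        induction i using Fin.cases with
        | zero => rw [glueFun_zero]; exact (z.2 a).2
        | succ j => rw [glueFun_succ]; exact (Finset.mem_sdiff.mp (g.2.2.1 ⟨j, a⟩)).1,
      by
        rintro ⟨i, a⟩ ⟨j, b⟩ hne
        show glueFun (fun a => ↑(z.1 a)) g.1.1 ⟨i, a⟩ ≠ glueFun (fun a => ↑(z.2 a)) g.1.2 ⟨j, b⟩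
        induction i using Fin.cases with
        | zero =>
          induction j using Fin.cases with
          | zero => exact absurd rfl hne
          | succ j' =>
            rw [glueFun_zero, glueFun_succ]
            intro heq
            have hg := (Finset.mem_sdiff.mp (g.2.2.1 ⟨j', b⟩)).2
            refine hg ?_
            simp only [img, Finset.mem_image, Finset.mem_univ, true_and]
            exact ⟨a, heq⟩
        | succ i' =>
          induction j using Fin.cases with
          | zero =>
            rw [glueFun_succ, glueFun_zero]
            intro heq
            have hg := (Finset.mem_sdiff.mp (g.2.1 ⟨i', a⟩)).2
            refine hg ?_
            simp only [img, Finset.mem_image, Finset.mem_univ, true_and]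
            exact ⟨b, heq.symm⟩
          | succ j' =>
            rw [glueFun_succ, glueFun_succ]
            exact g.2.2.2 ⟨i', a⟩ ⟨j', b⟩ (by simpa using hne)⟩,
     by
      apply Prod.ext
      · funext a
        apply Subtype.ext
        exact glueFun_zero (fun a => ↑(z.1 a)) g.1.1 a
      · funext a
        apply Subtype.ext
        exact glueFun_zero (fun a => ↑(z.2 a)) g.1.2 a⟩
  left_inv f := by
    apply Subtype.ext
    apply Subtype.ext
    apply Prod.ext
    · funext v
      rcases v with ⟨i, a⟩
      induction i using Fin.cases with
      | zero =>
        exact (glueFun_zero (fun a => ↑(z.1 a)) (fun v => f.1.1.1 ⟨v.1.succ, v.2⟩) a).trans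
          ((congrArg Subtype.val (congrFun (congrArg Prod.fst f.2) a)).symm)
      | succ j =>
        exact glueFun_succ (fun a => ↑(z.1 a)) (fun v => f.1.1.1 ⟨v.1.succ, v.2⟩) j a
    · funext v
      rcases v with ⟨i, a⟩
      induction i using Fin.cases with
      | zero =>
        exact (glueFun_zero (fun a => ↑(z.2 a)) (fun v => f.1.1.2 ⟨v.1.succ, v.2⟩) a).trans
          ((congrArg Subtype.val (congrFun (congrArg Prod.snd f.2) a)).symm)
      | succ j =>
        exact glueFun_succ (fun a => ↑(z.2 a)) (fun v => f.1.1.2 ⟨v.1.succ, v.2⟩) j a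
  right_inv g := by
    apply Subtype.ext
    apply Prod.ext
    · funext v
      rcases v with ⟨j, a⟩
      exact glueFun_succ (fun a => ↑(z.1 a)) g.1.1 j a
    · funext v
      rcases v with ⟨j, a⟩
      exact glueFun_succ (fun a => ↑(z.2 a)) g.1.2 j a

lemma cardQF : ∀ (k : ℕ) (r : Fin k → ℕ) (A B : Finset (Fin q)),
    Nat.card (QF k r A B) = Rpc (List.ofFn r) A B := by
  intro k
  induction k with
  | zero =>
    intro r A B
    rw [List.ofFn_zero]
    have e : QF 0 r A B ≃ Unit :=
      { toFun := fun _ => ()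
        invFun := fun _ => ⟨(fun v => v.1.elim0, fun v => v.1.elim0),
          fun v => v.1.elim0, fun v => v.1.elim0, fun u v _ => u.1.elim0⟩
        left_inv := fun f => Subtype.ext (Prod.ext (funext fun v => v.1.elim0)
          (funext fun v => v.1.elim0))
        right_inv := fun _ => rfl }
    rw [Nat.card_congr e, Nat.card_eq_fintype_card, Fintype.card_unit]
    simp [Rpc]
  | succ k ih =>
    intro r A B
    rw [Nat.card_eq_fintype_card, card_eq_sum_fibers (qf0 (r := r) (A := A) (B := B)),
      List.ofFn_succ, Rpc]
    refine Finset.sum_congr rfl fun z _ => ?_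
    rw [Nat.card_congr (qfFiberEquiv k r A B z), ih]

end CBS

namespace CBS

variable {q : ℕ}

open SimpleGraph

noncomputable def homEquivPF (k : ℕ) (r : Fin k → ℕ) (A : Set (Fin q)) :
    ((completeMultipartiteGraph fun i => Fin (r i)) →g (completeGraph (Fin q)).induce A) ≃
      PF k r (Set.toFinite A).toFinset where
  toFun f :=
    ⟨fun v => ↑(f v),
     fun v => by rw [Set.Finite.mem_toFinset]; exact (f v).2,
     fun u v huv => by
        have hadj : (completeMultipartiteGraph fun i => Fin (r i)).Adj u v := by
          simpa using huv
        have := f.map_adj hadj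
        intro h
        exact (by simpa using this : f u ≠ f v) (Subtype.ext h)⟩
  invFun g :=
    { toFun := fun v => ⟨g.1 v, by
        have := g.2.1 v
        rwa [Set.Finite.mem_toFinset] at this⟩
      map_rel' := by
        intro u v huv
        have h1 : u.1 ≠ v.1 := by simpa using huv
        simpa using g.2.2 u v h1 }
  left_inv f := DFunLike.ext _ _ fun v => Subtype.ext rfl
  right_inv g := Subtype.ext (funext fun v => rfl)

noncomputable def homEquivQF (k : ℕ) (r : Fin k → ℕ) (A B : Set (Fin q)) :
    {f : tensorK2 (completeMultipartiteGraph fun i => Fin (r i)) →g completeGraph (Fin q) //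
      (∀ v, f (v, 0) ∈ A) ∧ (∀ v, f (v, 1) ∈ B)} ≃
      QF k r (Set.toFinite A).toFinset (Set.toFinite B).toFinset where
  toFun f :=
    ⟨(fun v => f.1 (v, 0), fun v => f.1 (v, 1)),
     fun v => by rw [Set.Finite.mem_toFinset]; exact f.2.1 v,
     fun v => by rw [Set.Finite.mem_toFinset]; exact f.2.2 v,
     fun u v huv => by
       have hadj : (tensorK2 (completeMultipartiteGraph fun i => Fin (r i))).Adj (u, 0) (v, 1) :=
         show (completeMultipartiteGraph fun i => Fin (r i)).Adj u v ∧ (0 : Fin 2) ≠ 1 from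
         ⟨by simpa using huv, show (0 : Fin 2) ≠ 1 by decide⟩
       have := f.1.map_adj hadj
       simpa using this⟩
  invFun g :=
    ⟨{ toFun := fun w => if w.2 = 0 then g.1.1 w.1 else g.1.2 w.1
       map_rel' := by
         rintro ⟨u, i⟩ ⟨v, j⟩ hadj
         obtain ⟨huv, hij⟩ : (completeMultipartiteGraph fun i => Fin (r i)).Adj u v ∧ i ≠ j := hadj
         have h1 : u.1 ≠ v.1 := by simpa using huv
         simp only [top_adj]
         fin_cases i <;> fin_cases j
         · exact absurd rfl hij
         · simpa using g.2.2.2 u v h1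
         · simpa using fun h => (g.2.2.2 v u h1.symm) h.symm
         · exact absurd rfl hij },
     fun v => by
       have := g.2.1 v
       rw [Set.Finite.mem_toFinset] at this
       simpa using this,
     fun v => by
       have := g.2.2.1 v
       rw [Set.Finite.mem_toFinset] at this
       simpa using this⟩
  left_inv f := by
    apply Subtype.ext
    apply DFunLike.ext
    rintro ⟨v, i⟩
    fin_cases i <;> rfl
  right_inv g := by
    apply Subtype.ext
    apply Prod.ext
    · funext v; rfl
    · funext v; rfl

end CBS

/-- For all `k ≥ 1`, positive part sizes `r₁,…,r_k` and `q ≥ 1`, the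
complete multipartite graph `K(r₁,…,r_k)` is cross-bipartite swapping in `K_q`. -/
theorem stmt17 (k q : ℕ) (hk : 1 ≤ k) (hq : 1 ≤ q)
    (r : Fin k → ℕ) (hr : ∀ i, 1 ≤ r i) :
    CrossBipartiteSwapping (completeMultipartiteGraph fun i => Fin (r i))
      (completeGraph (Fin q)) := by
  intro A B
  simp only [homCount, homB]
  rw [Nat.card_congr (CBS.homEquivPF k r A), Nat.card_congr (CBS.homEquivPF k r B),
    Nat.card_congr (CBS.homEquivQF k r A B),
    CBS.cardPF, CBS.cardPF, CBS.cardQF]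
  exact CBS.core (List.ofFn r) _ _
end
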